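/- Let g_i : ℝⁿ → ℝ (i = 1, …, m) be convex functions, let g(x) := max_{1 ≤ i ≤ m} g_i(x), and let C := {x ∈ ℝⁿ : g(x) ≤ 0}. Assume there exists w ∈ ℝⁿ with g(w) < 0. Then for every y ∈ ℝⁿ with g(y) > 0, one has dist(y, C) ≤ (g(y)/(g(y) − g(w)))·‖y − w‖. -/

import Mathlib

open scoped RealInnerProductSpace
open Metric Filter

theorem stmt_5 {n m : ℕ} (hn : 0 < n) (hm : 0 < m)
    (gi : Fin m → EuclideanSpace ℝ (Fin n) → ℝ)
    (hgconv : ∀ i, ConvexOn ℝ Set.univ (gi i))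
    -- `g x = max_{1 ≤ i ≤ m} gi i x`
    (g : EuclideanSpace ℝ (Fin n) → ℝ)
    (hg : ∀ x, IsGreatest (Set.range fun i => gi i x) (g x))
    (w : EuclideanSpace ℝ (Fin n)) (hw : g w < 0) :
    ∀ y : EuclideanSpace ℝ (Fin n), 0 < g y →
      infDist y {x : EuclideanSpace ℝ (Fin n) | g x ≤ 0} ≤
        g y / (g y - g w) * ‖y - w‖ := by
  intro y hy
  have hden : 0 < g y - g w := by linarith
  set t : ℝ := g y / (g y - g w) with ht
  have ht0 : 0 < t := div_pos hy hden
  have ht1 : t < 1 := (div_lt_one hden).2 (by linarith)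
  set z : EuclideanSpace ℝ (Fin n) := (1 - t) • y + t • w with hz
  have hgz : g z ≤ 0 := by
    obtain ⟨i, hi⟩ := (hg z).1
    have h1 : gi i z ≤ (1 - t) * gi i y + t * gi i w :=
      (hgconv i).2 (Set.mem_univ y) (Set.mem_univ w) (by linarith) (le_of_lt ht0)
        (by ring)
    have h2 : gi i y ≤ g y := (hg y).2 ⟨i, rfl⟩
    have h3 : gi i w ≤ g w := (hg w).2 ⟨i, rfl⟩
    have h4 : (1 - t) * g y + t * g w = 0 := by
      field_simp [ht]
      have h5 : t * (g y - g w) = g y := by rw [ht]; exact div_mul_cancel₀ _ hden.ne'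
      linear_combination -h5
    have := hi
    nlinarith
  have hmem : z ∈ {x : EuclideanSpace ℝ (Fin n) | g x ≤ 0} := hgz
  calc infDist y {x : EuclideanSpace ℝ (Fin n) | g x ≤ 0} ≤ dist y z :=
        infDist_le_dist_of_mem hmem
    _ = ‖t • (y - w)‖ := by
        rw [dist_eq_norm]
        congr 1
        rw [hz]
        module
    _ = t * ‖y - w‖ := by rw [norm_smul, Real.norm_eq_abs, abs_of_pos ht0]
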